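/- The operator Γ defined on bounded continuous functions of finitely many real variables by Γ[φ](v_1,…,v_{k+1}) = Σ_{i=1}^k [(1/2π)∫_0^{2π} φ(v_1,…, v_i cos θ − v_{k+1} sin θ, …, v_k) dθ − φ(v_1,…,v_k)] (for φ depending on k variables) is a derivation with respect to the symmetrized tensor product: Γ[f ⊗ g] = Γ[f] ⊗ g + f ⊗ Γ[g]. -/

import Mathlib

open MeasureTheory Real

/-- McKean's operator `Γ`, taking a function of `k` variables to a function of
`k+1` variables. -/
noncomputable def Gam (k : ℕ) (f : (Fin k → ℝ) → ℝ) : (Fin (k+1) → ℝ) → ℝ :=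
  fun v => ∑ i : Fin k,
    ((2 * Real.pi)⁻¹ * (∫ θ in (0:ℝ)..(2 * Real.pi),
        f (fun l => if l = i then v i.castSucc * Real.cos θ - v (Fin.last k) * Real.sin θ
                    else v l.castSucc))
      - f (fun l => v l.castSucc))

/-- The symmetrized tensor product of a function of `a` variables and a function of
`b` variables. -/
noncomputable def symProd (a b : ℕ) (f : (Fin a → ℝ) → ℝ) (g : (Fin b → ℝ) → ℝ) :
    (Fin (a + b) → ℝ) → ℝ :=
  fun v => (((a + b).factorial : ℝ))⁻¹ * ∑ σ : Equiv.Perm (Fin (a + b)),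
    f (fun i => v (σ (Fin.castAdd b i))) * g (fun j => v (σ (Fin.natAdd a j)))

/-- The symmetrization of a function of `k` variables; functions with the same
symmetrization are identified. -/
noncomputable def symmetrize (k : ℕ) (h : (Fin k → ℝ) → ℝ) : (Fin k → ℝ) → ℝ :=
  fun v => ((k.factorial : ℝ))⁻¹ * ∑ σ : Equiv.Perm (Fin k), h (fun i => v (σ i))

section McKeanAux

def extPerm (n : ℕ) (σ : Equiv.Perm (Fin n)) : Equiv.Perm (Fin (n+1)) :=
  finSumFinEquiv.symm.trans ((Equiv.sumCongr σ (Equiv.refl (Fin 1))).trans finSumFinEquiv)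

@[simp] lemma extPerm_castSucc (n : ℕ) (σ : Equiv.Perm (Fin n)) (i : Fin n) :
    extPerm n σ i.castSucc = (σ i).castSucc := by
  simp [extPerm, Fin.castSucc]

@[simp] lemma extPerm_last (n : ℕ) (σ : Equiv.Perm (Fin n)) :
    extPerm n σ (Fin.last n) = Fin.last n := by
  have h : Fin.last n = Fin.natAdd n (0 : Fin 1) := by ext; simp
  rw [h, extPerm]
  simp only [Equiv.trans_apply, finSumFinEquiv_symm_apply_natAdd, Equiv.sumCongr_apply,
    Sum.map_inr, Equiv.refl_apply, finSumFinEquiv_apply_right]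

def dPerm (a b : ℕ) : Equiv.Perm (Fin (a+b+1)) :=
  (finCongr (show a+b+1 = a+(b+1) by omega)).trans
    (finSumFinEquiv.symm.trans ((Equiv.sumCongr (Equiv.refl (Fin a)) (finRotate (b+1))).trans
      (finSumFinEquiv.trans (finCongr (show a+(b+1) = a+b+1 by omega)))))

lemma dPerm_f (a b : ℕ) (j : Fin a) :
    dPerm a b ((Fin.castAdd b j).castSucc)
      = Fin.cast (Nat.add_right_comm a 1 b) (Fin.castAdd b (Fin.castSucc j)) := by
  have h1 : (Fin.cast (show a+b+1 = a+(b+1) by omega) ((Fin.castAdd b j).castSucc))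
      = Fin.castAdd (b+1) j := by ext; simp
  simp only [dPerm, Equiv.trans_apply, finCongr_apply, h1,
    finSumFinEquiv_symm_apply_castAdd, Equiv.sumCongr_apply, Sum.map_inl, Equiv.refl_apply,
    finSumFinEquiv_apply_left]
  ext; simp

lemma dPerm_last (a b : ℕ) :
    dPerm a b (Fin.last (a+b))
      = Fin.cast (Nat.add_right_comm a 1 b) (Fin.castAdd b (Fin.last a)) := by
  have h1 : (Fin.cast (show a+b+1 = a+(b+1) by omega) (Fin.last (a+b)))
      = Fin.natAdd a (Fin.last b) := by ext; simp
  simp only [dPerm, Equiv.trans_apply, finCongr_apply, h1,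
    finSumFinEquiv_symm_apply_natAdd, Equiv.sumCongr_apply, Sum.map_inr]
  rw [show finRotate (b+1) (Fin.last b) = 0 by simp]
  simp only [finSumFinEquiv_apply_right]
  ext; simp

lemma dPerm_g (a b : ℕ) (j : Fin b) :
    dPerm a b ((Fin.natAdd a j).castSucc)
      = Fin.cast (Nat.add_right_comm a 1 b) (Fin.natAdd (a+1) j) := by
  have h1 : (Fin.cast (show a+b+1 = a+(b+1) by omega) ((Fin.natAdd a j).castSucc))
      = Fin.natAdd a (Fin.castSucc j) := by ext; simp
  simp only [dPerm, Equiv.trans_apply, finCongr_apply, h1,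
    finSumFinEquiv_symm_apply_natAdd, Equiv.sumCongr_apply, Sum.map_inr,
    finRotate_succ_apply, finSumFinEquiv_apply_right]
  ext
  simp [Fin.add_def]
  have : ((j:ℕ)+1) % (b+1) = (j:ℕ)+1 := Nat.mod_eq_of_lt (by omega)
  omega

lemma collapse {G H : Type*} [Group G] [Fintype G] [Fintype H] [DecidableEq G]
    (e : H → G) (h : G → ℝ) :
    ∑ τ : G, ∑ σ : H, h (τ * e σ) = (Fintype.card H : ℝ) * ∑ ρ : G, h ρ := by
  rw [Finset.sum_comm]
  have key : ∀ σ : H, ∑ τ : G, h (τ * e σ) = ∑ ρ : G, h ρ := fun σ =>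
    Equiv.sum_comp (Equiv.mulRight (e σ)) h
  simp only [key, Finset.sum_const, Finset.card_univ, nsmul_eq_mul]

noncomputable def EE (a b : ℕ) (f : (Fin a → ℝ) → ℝ) (g : (Fin b → ℝ) → ℝ)
    (v : Fin (a+b+1) → ℝ) (σ : Equiv.Perm (Fin (a+b+1))) (m : Fin (a+b)) : ℝ :=
  (2 * Real.pi)⁻¹ * (∫ θ in (0:ℝ)..(2 * Real.pi),
      f (fun j => if Fin.castAdd b j = m
            then v (σ m.castSucc) * Real.cos θ - v (σ (Fin.last (a+b))) * Real.sin θ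
            else v (σ (Fin.castAdd b j).castSucc))
    * g (fun j => if Fin.natAdd a j = m
            then v (σ m.castSucc) * Real.cos θ - v (σ (Fin.last (a+b))) * Real.sin θ
            else v (σ (Fin.natAdd a j).castSucc)))
  - f (fun j => v (σ (Fin.castAdd b j).castSucc)) * g (fun j => v (σ (Fin.natAdd a j).castSucc))

lemma contAux {k : ℕ} {f : (Fin k → ℝ) → ℝ} (hf : Continuous f) (p : Fin k → Prop)
    [DecidablePred p] (A : Fin k → ℝ) (B : ℝ) (C : Fin k → ℝ) :
    Continuous fun θ : ℝ => f (fun j => if p j then A j * Real.cos θ - B * Real.sin θ else C j) := by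
  apply hf.comp
  apply continuous_pi
  intro j
  by_cases h : p j <;> simp only [h, if_true, if_false] <;> fun_prop

variable {a b : ℕ} {f : (Fin a → ℝ) → ℝ} {g : (Fin b → ℝ) → ℝ}

noncomputable def SS (a b : ℕ) (f : (Fin a → ℝ) → ℝ) (g : (Fin b → ℝ) → ℝ)
    (v : Fin (a+b+1) → ℝ) (τ : Equiv.Perm (Fin (a+b+1))) (σ : Equiv.Perm (Fin (a+b)))
    (i : Fin (a+b)) : ℝ :=
  (2 * Real.pi)⁻¹ * (∫ θ in (0:ℝ)..(2 * Real.pi),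
      f (fun j => if σ (Fin.castAdd b j) = i
            then v (τ i.castSucc) * Real.cos θ - v (τ (Fin.last (a+b))) * Real.sin θ
            else v (τ ((σ (Fin.castAdd b j)).castSucc)))
    * g (fun j => if σ (Fin.natAdd a j) = i
            then v (τ i.castSucc) * Real.cos θ - v (τ (Fin.last (a+b))) * Real.sin θ
            else v (τ ((σ (Fin.natAdd a j)).castSucc))))
  - f (fun j => v (τ ((σ (Fin.castAdd b j)).castSucc)))
    * g (fun j => v (τ ((σ (Fin.natAdd a j)).castSucc)))

lemma step1 (hf : Continuous f) (hg : Continuous g) (v : Fin (a+b+1) → ℝ)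
    (τ : Equiv.Perm (Fin (a+b+1))) :
    Gam (a+b) (symProd a b f g) (fun i => v (τ i))
      = ((a+b).factorial : ℝ)⁻¹ * ∑ σ : Equiv.Perm (Fin (a+b)), ∑ i : Fin (a+b),
          SS a b f g v τ σ i := by
  conv_rhs => rw [Finset.sum_comm]
  rw [Finset.mul_sum]
  simp only [Gam, symProd]
  refine Finset.sum_congr rfl fun i _ => ?_
  rw [intervalIntegral.integral_const_mul,
    intervalIntegral.integral_finset_sum]
  simp only [SS, mul_sub, Finset.mul_sum, Finset.sum_sub_distrib]
  congr 1 <;> exact Finset.sum_congr rfl fun σ _ => by ring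
  exact fun σ _ => (Continuous.intervalIntegrable
      (((contAux hf _ _ _ _).mul (contAux hg _ _ _ _))) _ _)

lemma step2 (v : Fin (a+b+1) → ℝ) (τ : Equiv.Perm (Fin (a+b+1)))
    (σ : Equiv.Perm (Fin (a+b))) (m : Fin (a+b)) :
    SS a b f g v τ σ (σ m) = EE a b f g v (τ * extPerm (a+b) σ) m := by
  simp only [SS, EE, Equiv.Perm.mul_apply, extPerm_castSucc, extPerm_last,
    Equiv.apply_eq_iff_eq, EmbeddingLike.apply_eq_iff_eq]

lemma LHSnf (hf : Continuous f) (hg : Continuous g) (v : Fin (a+b+1) → ℝ) :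
    symmetrize (a+b+1) (Gam (a+b) (symProd a b f g)) v
      = ((a+b+1).factorial : ℝ)⁻¹ * ∑ σ' : Equiv.Perm (Fin (a+b+1)), ∑ m : Fin (a+b),
          EE a b f g v σ' m := by
  simp only [symmetrize]
  congr 1
  calc ∑ τ : Equiv.Perm (Fin (a+b+1)), Gam (a+b) (symProd a b f g) (fun i => v (τ i))
      = ∑ τ : Equiv.Perm (Fin (a+b+1)), ((a+b).factorial : ℝ)⁻¹ *
          ∑ σ : Equiv.Perm (Fin (a+b)), ∑ i : Fin (a+b), SS a b f g v τ σ i :=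
        Finset.sum_congr rfl fun τ _ => step1 hf hg v τ
    _ = ∑ τ : Equiv.Perm (Fin (a+b+1)), ((a+b).factorial : ℝ)⁻¹ *
          ∑ σ : Equiv.Perm (Fin (a+b)), ∑ m : Fin (a+b),
            EE a b f g v (τ * extPerm (a+b) σ) m := by
        refine Finset.sum_congr rfl fun τ _ => congrArg _ (Finset.sum_congr rfl fun σ _ => ?_)
        rw [← Equiv.sum_comp σ (SS a b f g v τ σ)]
        exact Finset.sum_congr rfl fun m _ => step2 v τ σ m
    _ = ((a+b).factorial : ℝ)⁻¹ * ∑ τ : Equiv.Perm (Fin (a+b+1)),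
          ∑ σ : Equiv.Perm (Fin (a+b)), ∑ m : Fin (a+b),
            EE a b f g v (τ * extPerm (a+b) σ) m := (Finset.mul_sum _ _ _).symm
    _ = ((a+b).factorial : ℝ)⁻¹ * ((Fintype.card (Equiv.Perm (Fin (a+b))) : ℝ) *
          ∑ ρ : Equiv.Perm (Fin (a+b+1)), ∑ m : Fin (a+b), EE a b f g v ρ m) := by
        rw [collapse (extPerm (a+b)) (fun ρ => ∑ m : Fin (a+b), EE a b f g v ρ m)]
    _ = ∑ ρ : Equiv.Perm (Fin (a+b+1)), ∑ m : Fin (a+b), EE a b f g v ρ m := by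
        rw [Fintype.card_perm, Fintype.card_fin, ← mul_assoc,
          inv_mul_cancel₀ (by exact_mod_cast Nat.factorial_ne_zero (a+b)), one_mul]

lemma step2R (v : Fin (a+b+1) → ℝ) (ρ : Equiv.Perm (Fin (a+b+1))) :
    f (fun i => v (ρ (Fin.castAdd (b+1) i))) * Gam b g (fun j => v (ρ (Fin.natAdd a j)))
      = ∑ j₀ : Fin b, EE a b f g v ρ (Fin.natAdd a j₀) := by
  rw [Gam, Finset.mul_sum]
  refine Finset.sum_congr rfl fun j₀ _ => ?_
  have hc1 : ∀ j : Fin a, (Fin.castAdd b j = Fin.natAdd a j₀) = False := fun j => by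
    simp [Fin.ext_iff]; omega
  have hc2 : ∀ j : Fin b, (Fin.natAdd a j = Fin.natAdd a j₀) = (j = j₀) := fun j => by
    simp [Fin.ext_iff]
  have i0 : ∀ i : Fin a, (Fin.castAdd (b+1) i : Fin (a+b+1)) = (Fin.castAdd b i).castSucc := by
    intro i; ext; simp
  have i1 : ∀ j : Fin b, (Fin.natAdd a (Fin.castSucc j) : Fin (a+b+1))
      = (Fin.natAdd a j).castSucc := by intro j; ext; simp
  have i2 : (Fin.natAdd a (Fin.last b) : Fin (a+b+1)) = Fin.last (a+b) := by ext; simp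
  simp only [EE, hc1, hc2, if_false, i0, i1, i2, mul_sub]
  congr 1
  rw [intervalIntegral.integral_const_mul]
  ring

lemma RHS2nf (hf : Continuous f) (hg : Continuous g) (v : Fin (a+b+1) → ℝ) :
    symmetrize (a+b+1) (symProd a (b+1) f (Gam b g)) v
      = ((a+b+1).factorial : ℝ)⁻¹ * ∑ σ' : Equiv.Perm (Fin (a+b+1)), ∑ j₀ : Fin b,
          EE a b f g v σ' (Fin.natAdd a j₀) := by
  have unf : symmetrize (a+b+1) (symProd a (b+1) f (Gam b g)) v
      = ((a+b+1).factorial : ℝ)⁻¹ * ∑ τ : Equiv.Perm (Fin (a+b+1)),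
          ((a+b+1).factorial : ℝ)⁻¹ * ∑ p : Equiv.Perm (Fin (a+b+1)),
            f (fun i => v (τ (p (Fin.castAdd (b+1) i)))) *
              Gam b g (fun j => v (τ (p (Fin.natAdd a j)))) := rfl
  rw [unf]
  congr 1
  calc ∑ τ : Equiv.Perm (Fin (a+b+1)), ((a+b+1).factorial : ℝ)⁻¹ *
        ∑ p : Equiv.Perm (Fin (a+b+1)),
          f (fun i => v (τ (p (Fin.castAdd (b+1) i)))) *
            Gam b g (fun j => v (τ (p (Fin.natAdd a j))))
      = ((a+b+1).factorial : ℝ)⁻¹ * ∑ τ : Equiv.Perm (Fin (a+b+1)),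
          ∑ p : Equiv.Perm (Fin (a+b+1)),
            ∑ j₀ : Fin b, EE a b f g v (τ * p) (Fin.natAdd a j₀) := by
        rw [Finset.mul_sum]
        refine Finset.sum_congr rfl fun τ _ => ?_
        congr 1
        refine Finset.sum_congr rfl fun p _ => ?_
        exact step2R v (τ * p)
    _ = ∑ σ' : Equiv.Perm (Fin (a+b+1)), ∑ j₀ : Fin b, EE a b f g v σ' (Fin.natAdd a j₀) := by
        have h2 := collapse (G := Equiv.Perm (Fin (a+b+1))) id
          (fun ρ => ∑ j₀ : Fin b, EE a b f g v ρ (Fin.natAdd a j₀))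
        simp only [id_eq] at h2
        rw [h2, Fintype.card_perm, Fintype.card_fin, ← mul_assoc,
          inv_mul_cancel₀ (by exact_mod_cast Nat.factorial_ne_zero (a+b+1)), one_mul]

lemma step1R (v : Fin (a+b+1) → ℝ) (ρ : Equiv.Perm (Fin (a+b+1))) :
    Gam a f (fun i => v (ρ (Fin.cast (Nat.add_right_comm a 1 b) (Fin.castAdd b i)))) *
        g (fun j => v (ρ (Fin.cast (Nat.add_right_comm a 1 b) (Fin.natAdd (a+1) j))))
      = ∑ j₀ : Fin a, EE a b f g v (ρ * dPerm a b) (Fin.castAdd b j₀) := by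
  rw [Gam, Finset.sum_mul]
  refine Finset.sum_congr rfl fun j₀ _ => ?_
  have hc1 : ∀ j : Fin a, (Fin.castAdd b j = Fin.castAdd b j₀) = (j = j₀) := fun j => by
    simp [Fin.ext_iff]
  have hc2 : ∀ j : Fin b, (Fin.natAdd a j = Fin.castAdd b j₀) = False := fun j => by
    simp [Fin.ext_iff]; omega
  rw [sub_mul, mul_assoc, ← intervalIntegral.integral_mul_const]
  simp only [EE, Equiv.Perm.mul_apply, dPerm_f, dPerm_last, dPerm_g, hc1, hc2, if_false]

lemma RHS1nf (hf : Continuous f) (hg : Continuous g) (v : Fin (a+b+1) → ℝ) :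
    symmetrize (a+b+1) (fun w => symProd (a+1) b (Gam a f) g
        (fun i : Fin (a+1+b) => w (Fin.cast (Nat.add_right_comm a 1 b) i))) v
      = ((a+b+1).factorial : ℝ)⁻¹ * ∑ σ' : Equiv.Perm (Fin (a+b+1)), ∑ j₀ : Fin a,
          EE a b f g v σ' (Fin.castAdd b j₀) := by
  simp only [symmetrize, symProd]
  congr 1
  calc ∑ τ : Equiv.Perm (Fin (a+b+1)), ((a+1+b).factorial : ℝ)⁻¹ *
        ∑ p : Equiv.Perm (Fin (a+1+b)),
          Gam a f (fun i => v (τ (Fin.cast (Nat.add_right_comm a 1 b) (p (Fin.castAdd b i))))) *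
            g (fun j => v (τ (Fin.cast (Nat.add_right_comm a 1 b) (p (Fin.natAdd (a+1) j)))))
      = ((a+1+b).factorial : ℝ)⁻¹ * ∑ τ : Equiv.Perm (Fin (a+b+1)),
          ∑ p : Equiv.Perm (Fin (a+1+b)),
            ∑ j₀ : Fin a, EE a b f g v
              (τ * (finCongr (Nat.add_right_comm a 1 b)).permCongr p * dPerm a b)
              (Fin.castAdd b j₀) := by
        rw [Finset.mul_sum]
        refine Finset.sum_congr rfl fun τ _ => ?_
        congr 1
        refine Finset.sum_congr rfl fun p _ => ?_
        exact step1R v (τ * (finCongr (Nat.add_right_comm a 1 b)).permCongr p)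
    _ = ∑ σ' : Equiv.Perm (Fin (a+b+1)), ∑ j₀ : Fin a, EE a b f g v σ' (Fin.castAdd b j₀) := by
        have h2 := collapse (G := Equiv.Perm (Fin (a+b+1)))
          (fun p : Equiv.Perm (Fin (a+1+b)) =>
            (finCongr (Nat.add_right_comm a 1 b)).permCongr p)
          (fun ρ => ∑ j₀ : Fin a, EE a b f g v (ρ * dPerm a b) (Fin.castAdd b j₀))
        rw [h2, Fintype.card_perm, Fintype.card_fin, ← mul_assoc,
          inv_mul_cancel₀ (by exact_mod_cast Nat.factorial_ne_zero (a+1+b)), one_mul]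
        exact Equiv.sum_comp (Equiv.mulRight (dPerm a b))
          (fun σ' => ∑ j₀ : Fin a, EE a b f g v σ' (Fin.castAdd b j₀))


end McKeanAux

/-- `Γ` is a derivation with respect to the symmetrized tensor product:
`Γ[f ⊗ g] = Γ[f] ⊗ g + f ⊗ Γ[g]` (as identified, i.e. symmetrized, functions). -/
theorem stmt19 (a b : ℕ) (f : (Fin a → ℝ) → ℝ) (g : (Fin b → ℝ) → ℝ)
    (hf : Continuous f) (hg : Continuous g) :
    symmetrize (a + b + 1) (Gam (a + b) (symProd a b f g)) =
      fun v : Fin (a + b + 1) → ℝ =>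
        symmetrize (a + b + 1)
          (fun w => symProd (a + 1) b (Gam a f) g
            (fun i : Fin (a + 1 + b) => w (Fin.cast (by omega) i))) v
        + symmetrize (a + b + 1) (symProd a (b + 1) f (Gam b g)) v := by
  funext v
  rw [LHSnf hf hg v, RHS1nf hf hg v, RHS2nf hf hg v, ← mul_add, ← Finset.sum_add_distrib]
  refine congrArg _ (Finset.sum_congr rfl fun σ' _ => ?_)
  exact Fin.sum_univ_add (f := fun m => EE a b f g v σ' m)
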